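/- The parametric QP optimizer is continuous in the parameter on the interior of its domain under strict feasibility: if H is positive definite and xₖ → x in X with U*(xₖ), U*(x) the unique optimizers, and if the feasible set at x has nonempty interior, then U*(xₖ) → U*(x). -/

import Mathlib

open Matrix Filter

lemma qp_combo {d : ℕ} {H : Matrix (Fin d) (Fin d) ℝ}
    (z a b : Fin d → ℝ) (s : ℝ) :
    (1/2) * ((a + s•(b-a)) ⬝ᵥ H *ᵥ (a + s•(b-a))) + (a + s•(b-a)) ⬝ᵥ z
      = (1-s)*((1/2)*(a ⬝ᵥ H *ᵥ a) + a ⬝ᵥ z) + s*((1/2)*(b ⬝ᵥ H *ᵥ b) + b ⬝ᵥ z)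
        + (1/2)*(s^2-s)*((b-a) ⬝ᵥ H *ᵥ (b-a)) := by
  simp only [Matrix.mulVec_add, Matrix.mulVec_sub, Matrix.mulVec_smul, dotProduct_add,
    add_dotProduct, dotProduct_sub, sub_dotProduct, dotProduct_smul, smul_dotProduct,
    smul_eq_mul]
  ring

lemma dot_bound {d : ℕ} (u v : Fin d → ℝ) : |u ⬝ᵥ v| ≤ d * ‖u‖ * ‖v‖ := by
  calc |u ⬝ᵥ v| ≤ ∑ i, |u i * v i| := Finset.abs_sum_le_sum_abs _ _
    _ ≤ ∑ _i : Fin d, ‖u‖ * ‖v‖ := Finset.sum_le_sum (fun i _ => by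
        rw [abs_mul]
        have h1 : |u i| ≤ ‖u‖ := by rw [← Real.norm_eq_abs]; exact norm_le_pi_norm u i
        have h2 : |v i| ≤ ‖v‖ := by rw [← Real.norm_eq_abs]; exact norm_le_pi_norm v i
        exact mul_le_mul h1 h2 (abs_nonneg _) (norm_nonneg _))
    _ = d * ‖u‖ * ‖v‖ := by simp [Finset.sum_const, Finset.card_univ]; ring

lemma mulVec_cont {m n : ℕ} (A : Matrix (Fin m) (Fin n) ℝ) :
    Continuous fun v : Fin n → ℝ => A *ᵥ v := by
  refine continuous_pi fun i => ?_
  simp only [Matrix.mulVec, dotProduct]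
  fun_prop

lemma qp_cont {d : ℕ} (H : Matrix (Fin d) (Fin d) ℝ) :
    Continuous fun v : Fin d → ℝ => v ⬝ᵥ H *ᵥ v := by
  simp only [dotProduct, Matrix.mulVec, dotProduct]
  fun_prop

lemma qp_coercive {d : ℕ} {H : Matrix (Fin d) (Fin d) ℝ} (hH : H.PosDef) :
    ∃ c > 0, ∀ v : Fin d → ℝ, c * ‖v‖^2 ≤ v ⬝ᵥ H *ᵥ v := by
  rcases Nat.eq_zero_or_pos d with hd | hd
  · refine ⟨1, one_pos, fun v => ?_⟩
    subst hd
    have hv : v = 0 := Subsingleton.elim v 0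
    rw [hv, norm_zero]
    simp
  · haveI : Nonempty (Fin d) := ⟨⟨0, hd⟩⟩
    have hne : (Metric.sphere (0 : Fin d → ℝ) 1).Nonempty := by
      rw [NormedSpace.sphere_nonempty]; norm_num
    obtain ⟨v0, hv0S, hv0min⟩ := (isCompact_sphere (0 : Fin d → ℝ) 1).exists_isMinOn hne
      (qp_cont H).continuousOn
    have hv0n : ‖v0‖ = 1 := by simpa using hv0S
    have hv0ne : v0 ≠ 0 := by intro h; rw [h] at hv0n; simp at hv0n
    refine ⟨v0 ⬝ᵥ H *ᵥ v0, hH.dotProduct_mulVec_pos hv0ne, fun v => ?_⟩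
    rcases eq_or_ne v 0 with rfl | hv
    · simp
    · have hnv : ‖v‖ ≠ 0 := norm_ne_zero_iff.mpr hv
      have hu : (‖v‖⁻¹ • v) ∈ Metric.sphere (0 : Fin d → ℝ) 1 := by
        simp [norm_smul, abs_of_nonneg (norm_nonneg v), inv_mul_cancel₀ hnv]
      have := hv0min hu
      simp only [Set.mem_setOf_eq] at this
      have hexp : (‖v‖⁻¹ • v) ⬝ᵥ H *ᵥ (‖v‖⁻¹ • v) = ‖v‖⁻¹ * ‖v‖⁻¹ * (v ⬝ᵥ H *ᵥ v) := by
        simp [Matrix.mulVec_smul, dotProduct_smul, smul_dotProduct, smul_eq_mul]; ring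
      rw [hexp] at this
      have h2 : (v0 ⬝ᵥ H *ᵥ v0) * ‖v‖^2 ≤ ‖v‖⁻¹ * ‖v‖⁻¹ * (v ⬝ᵥ H *ᵥ v) * ‖v‖^2 := by
        nlinarith [sq_nonneg ‖v‖, norm_nonneg v]
      have h3 : ‖v‖⁻¹ * ‖v‖⁻¹ * ‖v‖^2 = 1 := by
        field_simp [pow_two]
      calc (v0 ⬝ᵥ H *ᵥ v0) * ‖v‖^2 ≤ ‖v‖⁻¹ * ‖v‖⁻¹ * (v ⬝ᵥ H *ᵥ v) * ‖v‖^2 := h2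
        _ = (‖v‖⁻¹ * ‖v‖⁻¹ * ‖v‖^2) * (v ⬝ᵥ H *ᵥ v) := by ring
        _ = v ⬝ᵥ H *ᵥ v := by rw [h3, one_mul]

lemma qp_min {d q : ℕ} {H : Matrix (Fin d) (Fin d) ℝ}
    (G : Matrix (Fin q) (Fin d) ℝ) (r : Fin q → ℝ) (z : Fin d → ℝ)
    (Um U : Fin d → ℝ)
    (hU : ∀ i, (G *ᵥ U) i ≤ r i)
    (hUm : ∀ i, (G *ᵥ Um) i ≤ r i)
    (hopt : ∀ W, (∀ i, (G *ᵥ W) i ≤ r i) →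
      (1/2) * (Um ⬝ᵥ H *ᵥ Um) + Um ⬝ᵥ z ≤ (1/2) * (W ⬝ᵥ H *ᵥ W) + W ⬝ᵥ z) :
    (1/2) * (Um ⬝ᵥ H *ᵥ Um) + Um ⬝ᵥ z + (1/4) * ((U - Um) ⬝ᵥ H *ᵥ (U - Um))
      ≤ (1/2) * (U ⬝ᵥ H *ᵥ U) + U ⬝ᵥ z := by
  have hmid : ∀ i, (G *ᵥ (Um + (1/2:ℝ) • (U - Um))) i ≤ r i := by
    intro i
    have h1 := hU i; have h2 := hUm i
    simp only [Matrix.mulVec_add, Matrix.mulVec_smul, Matrix.mulVec_sub, Pi.add_apply,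
      Pi.smul_apply, Pi.sub_apply, smul_eq_mul]
    linarith
  have h3 := hopt _ hmid
  rw [qp_combo (H := H) z Um U (1/2)] at h3
  linarith

set_option maxHeartbeats 1000000 in
/-- Continuity of the parametric QP optimizer under strict feasibility: if
`xₖ → x`, the optimizers `U*(xₖ)` converge to `U*(x)`. -/
theorem parametric_qp_optimizer_continuous
    (n d q : ℕ)
    (H : Matrix (Fin d) (Fin d) ℝ) (hH : H.PosDef)
    (F : Matrix (Fin d) (Fin n) ℝ)
    (G : Matrix (Fin q) (Fin d) ℝ) (w : Fin q → ℝ) (E : Matrix (Fin q) (Fin n) ℝ)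
    (V : (Fin n → ℝ) → (Fin d → ℝ) → ℝ)
    (hV : V = fun x U => (1/2) * (U ⬝ᵥ H *ᵥ U) + U ⬝ᵥ F *ᵥ x)
    (xseq : ℕ → (Fin n → ℝ)) (x : Fin n → ℝ)
    (hx : Tendsto xseq atTop (nhds x))
    (Useq : ℕ → (Fin d → ℝ)) (Ustar : Fin d → ℝ)
    (hUseqFeas : ∀ k i, (G *ᵥ Useq k) i ≤ w i + (E *ᵥ xseq k) i)
    (hUseqOpt : ∀ k (U : Fin d → ℝ),
      (∀ i, (G *ᵥ U) i ≤ w i + (E *ᵥ xseq k) i) → V (xseq k) (Useq k) ≤ V (xseq k) U)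
    (hUstarFeas : ∀ i, (G *ᵥ Ustar) i ≤ w i + (E *ᵥ x) i)
    (hUstarOpt : ∀ U : Fin d → ℝ,
      (∀ i, (G *ᵥ U) i ≤ w i + (E *ᵥ x) i) → V x Ustar ≤ V x U)
    (hSlater : ∃ U0 : Fin d → ℝ, ∀ i, (G *ᵥ U0) i < w i + (E *ᵥ x) i) :
    Tendsto Useq atTop (nhds Ustar) := by
  obtain ⟨c, hc, hcoer⟩ := qp_coercive hH
  have hq0 : ∀ v : Fin d → ℝ, 0 ≤ v ⬝ᵥ H *ᵥ v := fun v =>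
    le_trans (mul_nonneg hc.le (sq_nonneg _)) (hcoer v)
  have hVdef : ∀ y U, V y U = (1/2) * (U ⬝ᵥ H *ᵥ U) + U ⬝ᵥ F *ᵥ y := fun y U => by rw [hV]
  obtain ⟨U0, hU0⟩ := hSlater
  obtain ⟨δ, hδdef⟩ : ∃ δ : Fin q → ℝ, δ = fun i => w i + (E *ᵥ x) i - (G *ᵥ U0) i := ⟨_, rfl⟩
  have hδ : ∀ i, 0 < δ i := fun i => by
    have := hU0 i
    rw [hδdef]
    simpa using this
  have hGU0 : ∀ i, (G *ᵥ U0) i = w i + (E *ᵥ x) i - δ i := fun i => by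
    rw [hδdef]; ring
  obtain ⟨MF, hMFdef⟩ : ∃ MF : ℝ, MF = (d:ℝ) * (‖F *ᵥ x‖ + 1) := ⟨_, rfl⟩
  have hMF0 : 0 ≤ MF := by rw [hMFdef]; positivity
  obtain ⟨B, hBdef⟩ : ∃ B : ℝ, B = (1/2) * (U0 ⬝ᵥ H *ᵥ U0) + ‖U0‖ * MF := ⟨_, rfl⟩
  have hB0 : 0 ≤ B := by
    rw [hBdef]
    exact add_nonneg (by linarith [hq0 U0]) (mul_nonneg (norm_nonneg _) hMF0)
  obtain ⟨R, hRdef⟩ : ∃ R : ℝ, R = max 1 ((2*B + 2*MF)/c) := ⟨_, rfl⟩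
  have hR1 : (1:ℝ) ≤ R := by rw [hRdef]; exact le_max_left _ _
  have hR0 : (0:ℝ) ≤ R := by linarith
  obtain ⟨CW, hCWdef⟩ : ∃ CW : ℝ, CW = 2*R + ‖U0‖ := ⟨_, rfl⟩
  obtain ⟨Ct, hCtdef⟩ : ∃ Ct : ℝ, Ct = 2*‖Ustar‖ + ‖U0‖ := ⟨_, rfl⟩
  have hCW0 : 0 ≤ CW := by rw [hCWdef]; have := norm_nonneg U0; linarith
  have hCt0 : 0 ≤ Ct := by
    rw [hCtdef]; have := norm_nonneg U0; have := norm_nonneg Ustar; linarith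
  obtain ⟨D, hDdef⟩ : ∃ D : ℝ, D = B + R*MF := ⟨_, rfl⟩
  obtain ⟨D', hD'def⟩ : ∃ D' : ℝ, D' = B + ‖Ustar‖*MF := ⟨_, rfl⟩
  have hD0 : 0 ≤ D := by rw [hDdef]; exact add_nonneg hB0 (mul_nonneg hR0 hMF0)
  have hD'0 : 0 ≤ D' := by rw [hD'def]; exact add_nonneg hB0 (mul_nonneg (norm_nonneg _) hMF0)
  -- limit facts
  have hsub : Tendsto (fun k => xseq k - x) atTop (nhds 0) := by
    simpa using hx.sub (tendsto_const_nhds (x := x))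
  have hEt : Tendsto (fun k => E *ᵥ (xseq k - x)) atTop (nhds 0) := by
    have := ((mulVec_cont E).tendsto 0).comp hsub
    simpa [Function.comp_def] using this
  have hFt : Tendsto (fun k => ‖F *ᵥ (xseq k - x)‖) atTop (nhds 0) := by
    have := (((mulVec_cont F).tendsto 0).comp hsub).norm
    simpa using this
  have hFxk : Tendsto (fun k => ‖F *ᵥ xseq k‖) atTop (nhds ‖F *ᵥ x‖) :=
    (((mulVec_cont F).tendsto x).comp hx).norm
  have hcoord : ∀ a : ℝ, 0 < a → ∀ᶠ k in atTop, ∀ i, |(E *ᵥ (xseq k - x)) i| ≤ a * δ i := by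
    intro a ha
    rw [eventually_all]
    intro i
    have hi : Tendsto (fun k => (E *ᵥ (xseq k - x)) i) atTop (nhds 0) := by
      have := ((continuous_apply i).tendsto (0 : Fin q → ℝ)).comp hEt
      simpa [Function.comp_def] using this
    have hpos : 0 < a * δ i := mul_pos ha (hδ i)
    filter_upwards [Metric.tendsto_nhds.mp hi (a * δ i) hpos] with k hk
    rw [Real.dist_eq, sub_zero] at hk
    exact le_of_lt hk
  rw [Metric.tendsto_atTop]
  intro ε hε
  obtain ⟨γ', hγdef⟩ : ∃ g : ℝ, g = c*ε^2/48 := ⟨_, rfl⟩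
  have hγ : 0 < γ' := by
    rw [hγdef]
    have := mul_pos hc (pow_pos hε 2)
    linarith
  have hD1 : (0:ℝ) < D + 1 := by linarith
  have hD'1 : (0:ℝ) < D' + 1 := by linarith
  have hden : (0:ℝ) < 2*(‖U0‖+R)+2 := by have := norm_nonneg U0; linarith
  obtain ⟨t, htdef⟩ : ∃ t : ℝ, t = min 1 (γ'/(D'+1)) := ⟨_, rfl⟩
  obtain ⟨s, hsdef⟩ : ∃ s : ℝ, s = min (min 1 (γ'/(D+1))) (ε/(2*(‖U0‖+R)+2)) := ⟨_, rfl⟩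
  have ht0 : 0 < t := by rw [htdef]; exact lt_min one_pos (div_pos hγ hD'1)
  have ht1 : t ≤ 1 := by rw [htdef]; exact min_le_left _ _
  have hs0 : 0 < s := by
    rw [hsdef]; exact lt_min (lt_min one_pos (div_pos hγ hD1)) (div_pos hε hden)
  have hs1 : s ≤ 1 := by rw [hsdef]; exact le_trans (min_le_left _ _) (min_le_left _ _)
  have htD' : t * D' ≤ γ' := by
    have h1 : t ≤ γ'/(D'+1) := by rw [htdef]; exact min_le_right _ _
    have h3 : γ'/(D'+1)*D' ≤ γ' := by
      rw [div_mul_eq_mul_div, div_le_iff₀ hD'1]; linarith [hγ.le]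
    calc t*D' ≤ γ'/(D'+1)*D' := mul_le_mul_of_nonneg_right h1 hD'0
      _ ≤ γ' := h3
  have hsD : s * D ≤ γ' := by
    have h1 : s ≤ γ'/(D+1) := by
      rw [hsdef]; exact le_trans (min_le_left _ _) (min_le_right _ _)
    have h3 : γ'/(D+1)*D ≤ γ' := by
      rw [div_mul_eq_mul_div, div_le_iff₀ hD1]; linarith [hγ.le]
    calc s*D ≤ γ'/(D+1)*D := mul_le_mul_of_nonneg_right h1 hD0
      _ ≤ γ' := h3
  have hsE : s * (‖U0‖ + R) < ε/2 := by
    have h1 : s ≤ ε/(2*(‖U0‖+R)+2) := by rw [hsdef]; exact min_le_right _ _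
    have hUR : (0:ℝ) ≤ ‖U0‖ + R := by have := norm_nonneg U0; linarith
    have h3 : ε/(2*(‖U0‖+R)+2)*(‖U0‖+R) < ε/2 := by
      rw [div_mul_eq_mul_div, div_lt_iff₀ hden]
      linarith
    calc s*(‖U0‖+R) ≤ ε/(2*(‖U0‖+R)+2)*(‖U0‖+R) := mul_le_mul_of_nonneg_right h1 hUR
      _ < ε/2 := h3
  -- eventual facts
  have hE2 : ∀ᶠ k in atTop, ‖F *ᵥ xseq k‖ ≤ ‖F *ᵥ x‖ + 1 := by
    filter_upwards [Metric.tendsto_nhds.mp hFxk 1 one_pos] with k hk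
    rw [Real.dist_eq] at hk
    have := abs_lt.mp hk
    linarith [this.1, this.2]
  have hE5 : ∀ᶠ k in atTop, (d:ℝ) * ‖F *ᵥ (xseq k - x)‖ ≤ γ'/(CW + Ct + 1) := by
    have hp : (0:ℝ) < CW + Ct + 1 := by linarith
    have hpos : 0 < γ'/(CW+Ct+1) := div_pos hγ hp
    have hdt : Tendsto (fun k => (d:ℝ) * ‖F *ᵥ (xseq k - x)‖) atTop (nhds 0) := by
      simpa using hFt.const_mul (d:ℝ)
    filter_upwards [Metric.tendsto_nhds.mp hdt _ hpos] with k hk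
    rw [Real.dist_eq, sub_zero] at hk
    exact le_of_lt (lt_of_abs_lt hk)
  obtain ⟨N, hN⟩ := eventually_atTop.mp
    ((hcoord 1 one_pos).and (hE2.and ((hcoord t ht0).and ((hcoord s hs0).and hE5))))
  refine ⟨N, fun k hk => ?_⟩
  obtain ⟨h1, h2, h3, h4, h5⟩ := hN k hk
  obtain ⟨y, hy⟩ : ∃ y : Fin n → ℝ, y = xseq k := ⟨_, rfl⟩
  obtain ⟨u, hu⟩ : ∃ u : Fin d → ℝ, u = Useq k := ⟨_, rfl⟩
  rw [← hy] at h1 h2 h3 h4 h5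
  obtain ⟨εk, hεkdef⟩ : ∃ e : ℝ, e = (d:ℝ) * ‖F *ᵥ (y - x)‖ := ⟨_, rfl⟩
  have hεk0 : 0 ≤ εk := by rw [hεkdef]; positivity
  rw [← hεkdef] at h5
  have hdotk : ∀ v : Fin d → ℝ, |v ⬝ᵥ F *ᵥ (y - x)| ≤ ‖v‖ * εk := by
    intro v
    have hb := dot_bound v (F *ᵥ (y - x))
    calc |v ⬝ᵥ F *ᵥ (y-x)| ≤ (d:ℝ) * ‖v‖ * ‖F *ᵥ (y-x)‖ := hb
      _ = ‖v‖ * εk := by rw [hεkdef]; ring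
  have hEco : ∀ i, (E *ᵥ (y - x)) i = (E *ᵥ y) i - (E *ᵥ x) i := fun i => by
    rw [Matrix.mulVec_sub]; simp
  -- Step A : ‖u‖ ≤ R
  have hU0feasK : ∀ i, (G *ᵥ U0) i ≤ w i + (E *ᵥ y) i := by
    intro i
    have ha := h1 i
    rw [hEco i] at ha
    have hab := abs_le.mp ha
    have hδi := hδ i
    rw [hGU0 i]
    have : 1 * δ i = δ i := one_mul _
    linarith [hab.1]
  have hopt0 := hUseqOpt k U0 (by rw [← hy]; exact hU0feasK)
  rw [hVdef, hVdef, ← hy, ← hu] at hopt0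
  have hdyu : |u ⬝ᵥ F *ᵥ y| ≤ ‖u‖ * MF := by
    have hb := dot_bound u (F *ᵥ y)
    have h6 : (d:ℝ)*‖u‖*‖F *ᵥ y‖ ≤ ‖u‖ * MF := by
      rw [hMFdef]
      have h7 := mul_le_mul_of_nonneg_left h2
        (mul_nonneg (Nat.cast_nonneg (α := ℝ) d) (norm_nonneg u))
      linarith
    linarith
  have hdU0y : |U0 ⬝ᵥ F *ᵥ y| ≤ ‖U0‖ * MF := by
    have hb := dot_bound U0 (F *ᵥ y)
    have h6 : (d:ℝ)*‖U0‖*‖F *ᵥ y‖ ≤ ‖U0‖ * MF := by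
      rw [hMFdef]
      have h7 := mul_le_mul_of_nonneg_left h2
        (mul_nonneg (Nat.cast_nonneg (α := ℝ) d) (norm_nonneg U0))
      linarith
    linarith
  have hrA : c * ‖u‖^2 ≤ 2*B + 2*MF*‖u‖ := by
    have hcu := hcoer u
    have hup : (1/2)*(U0 ⬝ᵥ H *ᵥ U0) + U0 ⬝ᵥ F *ᵥ y ≤ B := by
      rw [hBdef]; linarith [(abs_le.mp hdU0y).2]
    linarith [(abs_le.mp hdyu).1]
  have hnu : ‖u‖ ≤ R := by
    by_cases hle : ‖u‖ ≤ 1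
    · linarith
    · push_neg at hle
      have hup : (0:ℝ) < ‖u‖ := by linarith
      have e1 : 2*B*1 ≤ 2*B*‖u‖ :=
        mul_le_mul_of_nonneg_left hle.le (by linarith : (0:ℝ) ≤ 2*B)
      have e2 : c*‖u‖*‖u‖ ≤ (2*B+2*MF)*‖u‖ := by nlinarith [hrA, e1]
      have h6 : c * ‖u‖ ≤ 2*B + 2*MF := le_of_mul_le_mul_right (by linarith [e2]) hup
      have h7 : ‖u‖ ≤ (2*B + 2*MF)/c := (le_div_iff₀ hc).mpr (by linarith [mul_comm c ‖u‖])
      rw [hRdef]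
      exact le_trans h7 (le_max_right _ _)
  -- Step B : Ut feasible at y
  obtain ⟨Ut, hUtdef⟩ : ∃ Ut : Fin d → ℝ, Ut = Ustar + t • (U0 - Ustar) := ⟨_, rfl⟩
  have hUtfeas : ∀ i, (G *ᵥ Ut) i ≤ w i + (E *ᵥ y) i := by
    intro i
    have ha := h3 i
    rw [hEco i] at ha
    have hab := abs_le.mp ha
    have hδi := hδ i
    have hst := hUstarFeas i
    have hg0 := hGU0 i
    rw [hUtdef]
    simp only [Matrix.mulVec_add, Matrix.mulVec_smul, Matrix.mulVec_sub, Pi.add_apply,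
      Pi.smul_apply, Pi.sub_apply, smul_eq_mul]
    rw [hg0]
    have hmulSt : (1-t) * ((G *ᵥ Ustar) i) ≤ (1-t) * (w i + (E *ᵥ x) i) :=
      mul_le_mul_of_nonneg_left hst (by linarith)
    linarith [hab.1]
  -- Step C : W feasible at x
  obtain ⟨W, hWdef⟩ : ∃ W : Fin d → ℝ, W = u + s • (U0 - u) := ⟨_, rfl⟩
  have hWfeas : ∀ i, (G *ᵥ W) i ≤ w i + (E *ᵥ x) i := by
    intro i
    have ha := h4 i
    rw [hEco i] at ha
    have hab := abs_le.mp ha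
    have hδi := hδ i
    have hfk := hUseqFeas k i
    rw [← hy, ← hu] at hfk
    have hg0 := hGU0 i
    rw [hWdef]
    simp only [Matrix.mulVec_add, Matrix.mulVec_smul, Matrix.mulVec_sub, Pi.add_apply,
      Pi.smul_apply, Pi.sub_apply, smul_eq_mul]
    rw [hg0]
    have hmulS : (1-s) * ((G *ᵥ u) i) ≤ (1-s) * (w i + (E *ᵥ y) i) :=
      mul_le_mul_of_nonneg_left hfk (by linarith)
    have h2n : (1-s) * ((E *ᵥ y) i - (E *ᵥ x) i) ≤ (1-s) * (s * δ i) :=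
      mul_le_mul_of_nonneg_left hab.2 (by linarith)
    have hsd : (0:ℝ) ≤ s * (s * δ i) := mul_nonneg hs0.le (mul_nonneg hs0.le hδi.le)
    linarith [hmulS, h2n, hsd]
  -- Step D : strong convexity at x
  have hoptx : ∀ W', (∀ i, (G *ᵥ W') i ≤ w i + (E *ᵥ x) i) →
      (1/2)*(Ustar ⬝ᵥ H *ᵥ Ustar) + Ustar ⬝ᵥ F *ᵥ x
        ≤ (1/2)*(W' ⬝ᵥ H *ᵥ W') + W' ⬝ᵥ F *ᵥ x := by
    intro W' hW'
    have := hUstarOpt W' hW'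
    rw [hVdef, hVdef] at this
    exact this
  have hSC := qp_min G (fun i => w i + (E *ᵥ x) i) (F *ᵥ x) Ustar W hWfeas hUstarFeas hoptx
  -- norm bounds
  have hnW : ‖W‖ ≤ CW := by
    rw [hWdef]
    have h6 : ‖U0 - u‖ ≤ ‖U0‖ + ‖u‖ := norm_sub_le _ _
    calc ‖u + s•(U0-u)‖ ≤ ‖u‖ + ‖s•(U0-u)‖ := norm_add_le _ _
      _ = ‖u‖ + s*‖U0-u‖ := by rw [norm_smul, Real.norm_eq_abs, abs_of_pos hs0]
      _ ≤ R + 1*(‖U0‖+‖u‖) := by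
          refine add_le_add hnu (mul_le_mul hs1 h6 (norm_nonneg _) one_pos.le)
      _ ≤ CW := by rw [hCWdef]; linarith
  have hnUt : ‖Ut‖ ≤ Ct := by
    rw [hUtdef]
    have h6 : ‖U0 - Ustar‖ ≤ ‖U0‖ + ‖Ustar‖ := norm_sub_le _ _
    calc ‖Ustar + t•(U0-Ustar)‖ ≤ ‖Ustar‖ + ‖t•(U0-Ustar)‖ := norm_add_le _ _
      _ = ‖Ustar‖ + t*‖U0-Ustar‖ := by rw [norm_smul, Real.norm_eq_abs, abs_of_pos ht0]
      _ ≤ ‖Ustar‖ + 1*(‖U0‖+‖Ustar‖) := by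
          refine add_le_add le_rfl (mul_le_mul ht1 h6 (norm_nonneg _) one_pos.le)
      _ ≤ Ct := by rw [hCtdef]; linarith
  -- parameter-change bounds
  have hconv : ∀ v : Fin d → ℝ, |v ⬝ᵥ F *ᵥ x - v ⬝ᵥ F *ᵥ y| ≤ ‖v‖ * εk := by
    intro v
    have h6 : v ⬝ᵥ F *ᵥ x - v ⬝ᵥ F *ᵥ y = -(v ⬝ᵥ F *ᵥ (y - x)) := by
      rw [Matrix.mulVec_sub, dotProduct_sub]; ring
    rw [h6, abs_neg]
    exact hdotk v
  have hWconv : (1/2)*(W ⬝ᵥ H *ᵥ W) + W ⬝ᵥ F *ᵥ x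
      ≤ (1/2)*(W ⬝ᵥ H *ᵥ W) + W ⬝ᵥ F *ᵥ y + CW * εk := by
    have h6 := (abs_le.mp (hconv W)).2
    have h7 : ‖W‖ * εk ≤ CW * εk := mul_le_mul_of_nonneg_right hnW hεk0
    linarith
  have hUtconv : (1/2)*(Ut ⬝ᵥ H *ᵥ Ut) + Ut ⬝ᵥ F *ᵥ y
      ≤ (1/2)*(Ut ⬝ᵥ H *ᵥ Ut) + Ut ⬝ᵥ F *ᵥ x + Ct * εk := by
    have h6 := (abs_le.mp (hconv Ut)).1
    have h7 : ‖Ut‖ * εk ≤ Ct * εk := mul_le_mul_of_nonneg_right hnUt hεk0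
    linarith
  -- convexity identities
  have hcvx1 := qp_combo (H := H) (F *ᵥ y) u U0 s
  rw [← hWdef] at hcvx1
  have hcvx2 := qp_combo (H := H) (F *ᵥ x) Ustar U0 t
  rw [← hUtdef] at hcvx2
  -- value bounds
  have hDbound : (1/2)*(U0 ⬝ᵥ H *ᵥ U0) + U0 ⬝ᵥ F *ᵥ y
      - ((1/2)*(u ⬝ᵥ H *ᵥ u) + u ⬝ᵥ F *ᵥ y) ≤ D := by
    have h7 := (abs_le.mp hdU0y).2
    have h8 := (abs_le.mp hdyu).1
    have h9 := hq0 u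
    have h10 : ‖u‖*MF ≤ R*MF := mul_le_mul_of_nonneg_right hnu hMF0
    rw [hDdef, hBdef]
    linarith
  have hdU0x : |U0 ⬝ᵥ F *ᵥ x| ≤ ‖U0‖ * MF := by
    have hb := dot_bound U0 (F *ᵥ x)
    have h6 : (d:ℝ)*‖U0‖*‖F *ᵥ x‖ ≤ ‖U0‖ * MF := by
      rw [hMFdef]
      linarith [mul_nonneg (Nat.cast_nonneg (α := ℝ) d) (norm_nonneg U0)]
    linarith
  have hdUsx : |Ustar ⬝ᵥ F *ᵥ x| ≤ ‖Ustar‖ * MF := by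
    have hb := dot_bound Ustar (F *ᵥ x)
    have h6 : (d:ℝ)*‖Ustar‖*‖F *ᵥ x‖ ≤ ‖Ustar‖ * MF := by
      rw [hMFdef]
      linarith [mul_nonneg (Nat.cast_nonneg (α := ℝ) d) (norm_nonneg Ustar)]
    linarith
  have hD'bound : (1/2)*(U0 ⬝ᵥ H *ᵥ U0) + U0 ⬝ᵥ F *ᵥ x
      - ((1/2)*(Ustar ⬝ᵥ H *ᵥ Ustar) + Ustar ⬝ᵥ F *ᵥ x) ≤ D' := by
    have h7 := (abs_le.mp hdU0x).2
    have h8 := (abs_le.mp hdUsx).1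
    have h9 := hq0 Ustar
    rw [hD'def, hBdef]
    linarith
  -- optimality at y
  have hoptUt := hUseqOpt k Ut (by rw [← hy]; exact hUtfeas)
  rw [hVdef, hVdef, ← hy, ← hu] at hoptUt
  -- grand chain
  have hmain : (1/4)*((W - Ustar) ⬝ᵥ H *ᵥ (W - Ustar)) ≤ t*D' + s*D + (CW+Ct)*εk := by
    have hf1 := mul_le_mul_of_nonneg_left hDbound hs0.le
    have hf2 := mul_nonneg (mul_nonneg hs0.le (sub_nonneg.mpr hs1)) (hq0 (U0 - u))
    have hf3 := mul_le_mul_of_nonneg_left hD'bound ht0.le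
    have hf4 := mul_nonneg (mul_nonneg ht0.le (sub_nonneg.mpr ht1)) (hq0 (U0 - Ustar))
    linarith [hSC, hWconv, hcvx1, hoptUt, hUtconv, hcvx2, hf1, hf2, hf3, hf4]
  have he1 : (CW+Ct)*εk ≤ γ' := by
    have hp : (0:ℝ) < CW + Ct + 1 := by linarith
    have h6 : εk*(CW+Ct+1) ≤ γ' := (le_div_iff₀ hp).mp h5
    linarith [hεk0]
  have h12 : (W - Ustar) ⬝ᵥ H *ᵥ (W - Ustar) ≤ c*ε^2/4 := by
    have h13 : (1/4)*((W - Ustar) ⬝ᵥ H *ᵥ (W - Ustar)) ≤ 3*γ' := by linarith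
    rw [hγdef] at h13
    linarith
  have hqA := hcoer (W - Ustar)
  have hA2 : ‖W - Ustar‖^2 ≤ (ε/2)^2 := by
    have h6 : c*‖W - Ustar‖^2 ≤ c*((ε/2)^2) := by
      calc c*‖W - Ustar‖^2 ≤ (W - Ustar) ⬝ᵥ H *ᵥ (W - Ustar) := hqA
        _ ≤ c*ε^2/4 := h12
        _ = c*((ε/2)^2) := by ring
    exact le_of_mul_le_mul_left h6 hc
  have hAn : ‖W - Ustar‖ ≤ ε/2 := by
    have h6 := Real.sqrt_le_sqrt hA2
    rwa [Real.sqrt_sq (norm_nonneg _), Real.sqrt_sq (by linarith : (0:ℝ) ≤ ε/2)] at h6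
  -- conclude
  rw [dist_eq_norm, ← hu]
  have hsplit : u - Ustar = (W - Ustar) - s•(U0 - u) := by
    rw [hWdef]; module
  have h6 : ‖U0 - u‖ ≤ ‖U0‖ + ‖u‖ := norm_sub_le _ _
  calc ‖u - Ustar‖ = ‖(W - Ustar) - s•(U0-u)‖ := by rw [hsplit]
    _ ≤ ‖W - Ustar‖ + ‖s•(U0-u)‖ := norm_sub_le _ _
    _ = ‖W - Ustar‖ + s*‖U0-u‖ := by rw [norm_smul, Real.norm_eq_abs, abs_of_pos hs0]
    _ ≤ ε/2 + s*(‖U0‖+R) := by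
        refine add_le_add hAn (mul_le_mul_of_nonneg_left ?_ hs0.le)
        linarith
    _ < ε := by linarith
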